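/- For every n ≥ 1, the polynomial identity P_n(x,y) = (2n-1)!! · (x+y)^n holds, where P_n(x,y) = Σ_{T ∈ 𝒫_n} x^{impr(T)} y^{prop(T)} is the sum over all labeled plane trees T with n edges of x raised to the number of improper edges of T times y raised to the number of proper edges of T. -/

import Mathlib

/-- A plane tree with labeled vertices: a root label together with an ordered
list of child subtrees.  (A plane tree is a rooted tree in which the children
of each node are linearly ordered.) -/
inductive LTree : Type where
  | node : ℕ → List LTree → LTree

namespace LTree

/-- The label of the root. -/
def rootLabel : LTree → ℕ
  | node a _ => a

/-- The list of child subtrees of the root. -/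
def children : LTree → List LTree
  | node _ cs => cs

/-- `deg_T(root)`: the number of children of the root. -/
def rootDeg (t : LTree) : ℕ := (children t).length

mutual
  /-- The list of all vertex labels of a tree. -/
  def labels : LTree → List ℕ
    | node a cs => a :: labelsList cs
  /-- The list of all vertex labels of a forest. -/
  def labelsList : List LTree → List ℕ
    | [] => []
    | c :: rest => labels c ++ labelsList rest
end

/-- `β(v)`: the smallest label occurring in the subtree `t` rooted at `v`. -/
def minLabel (t : LTree) : ℕ := (labels t).foldr min (rootLabel t)

/-- `min { j, β(c₁), …, β(cₖ) }` for a vertex `j` and a list of subtrees `c₁, …, cₖ`. -/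
def minOver (j : ℕ) (rest : List LTree) : ℕ := (rest.map minLabel).foldr min j

mutual
  /-- The list of edges of a tree, each recorded as a (parent label, child label)
  pair, in depth-first order. -/
  def edgeList : LTree → List (ℕ × ℕ)
    | node a cs => edgeListAux a cs
  def edgeListAux : ℕ → List LTree → List (ℕ × ℕ)
    | _, [] => []
    | a, c :: rest => (a, rootLabel c) :: (edgeList c ++ edgeListAux a rest)
end

mutual
  /-- The list of improper edges of a tree: if a vertex `j` has children
  `j₁, …, jₖ` (ordered left to right), the edge `(j, jᵢ)` is improper when
  `β(jᵢ) < min { j, β(j_{i+1}), …, β(jₖ) }`. -/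
  def improperEdges : LTree → List (ℕ × ℕ)
    | node a cs => improperEdgesAux a cs
  def improperEdgesAux : ℕ → List LTree → List (ℕ × ℕ)
    | _, [] => []
    | j, c :: rest =>
        (if minLabel c < minOver j rest then [(j, rootLabel c)] else [])
          ++ improperEdges c ++ improperEdgesAux j rest
end

mutual
  /-- The list of proper (i.e. non-improper) edges of a tree. -/
  def properEdges : LTree → List (ℕ × ℕ)
    | node a cs => properEdgesAux a cs
  def properEdgesAux : ℕ → List LTree → List (ℕ × ℕ)
    | _, [] => []
    | j, c :: rest =>
        (if minLabel c < minOver j rest then [] else [(j, rootLabel c)])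
          ++ properEdges c ++ properEdgesAux j rest
end

/-- `impr T`: the number of improper edges of `T`. -/
def impr (t : LTree) : ℕ := (improperEdges t).length

/-- `prop T`: the number of proper edges of `T`. -/
def propCount (t : LTree) : ℕ := (properEdges t).length

/-- The number of edges of `T`. -/
def edgeCount (t : LTree) : ℕ := (edgeList t).length

/-- `T` is a labeled plane tree with `n` edges: its `n + 1` vertices are labeled
bijectively with `{1, 2, …, n + 1}`. -/
def IsLPT (n : ℕ) (t : LTree) : Prop := (labels t).Perm (List.range' 1 (n + 1))

/-- `T` is increasing: vertex labels increase along every path from the root. -/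
inductive Increasing : LTree → Prop where
  | node (a : ℕ) (cs : List LTree) :
      (∀ c ∈ cs, a < rootLabel c) → (∀ c ∈ cs, Increasing c) → Increasing (node a cs)

-- ===== auxiliary lemmas =====

lemma labels_node (a : ℕ) (cs : List LTree) : labels (node a cs) = a :: labelsList cs := by
  simp [labels]

lemma labelsList_cons (c : LTree) (rest : List LTree) :
    labelsList (c :: rest) = labels c ++ labelsList rest := by
  simp [labelsList]

lemma foldr_min_le (l : List ℕ) (x : ℕ) : l.foldr min x ≤ x := by
  induction l with
  | nil => simp
  | cons a l ih => simp only [List.foldr_cons]; exact le_trans (min_le_right _ _) ih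

lemma foldr_min_comm (l : List ℕ) (x y : ℕ) :
    min x (l.foldr min y) = min y (l.foldr min x) := by
  induction l with
  | nil => exact min_comm x y
  | cons a l ih =>
    simp only [List.foldr_cons]
    rw [min_left_comm x a, ih, min_left_comm a y]

lemma foldr_min_labels (t : LTree) (y : ℕ) :
    (labels t).foldr min y = min (minLabel t) y := by
  obtain ⟨a, cs⟩ := t
  rw [show minLabel (node a cs) = (labels (node a cs)).foldr min a from rfl]
  rw [labels_node]
  simp only [List.foldr_cons]
  rw [min_assoc, min_comm ((labelsList cs).foldr min a) y, foldr_min_comm, ← min_assoc,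
    min_comm a y, min_assoc, min_eq_right (foldr_min_le _ _)]

lemma minOver_eq_minLabel (a : ℕ) (cs : List LTree) :
    minOver a cs = minLabel (node a cs) := by
  induction cs with
  | nil =>
    show ([] : List ℕ).foldr min a = minLabel (node a [])
    rw [show minLabel (node a []) = (labels (node a [])).foldr min a from rfl, labels_node]
    simp [labelsList]
  | cons c rest ih =>
    show ((c :: rest).map minLabel).foldr min a = minLabel (node a (c :: rest))
    rw [List.map_cons, List.foldr_cons]
    have h1 : (rest.map minLabel).foldr min a = minOver a rest := rfl
    rw [h1, ih]
    rw [show minLabel (node a (c :: rest)) = (labels (node a (c :: rest))).foldr min a from rfl,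
      labels_node, labelsList_cons]
    simp only [List.foldr_cons, List.foldr_append]
    rw [foldr_min_labels c]
    rw [show minLabel (node a rest) = (labels (node a rest)).foldr min a from rfl, labels_node]
    simp only [List.foldr_cons]
    rw [min_left_comm]

lemma minLabel_mem (t : LTree) : minLabel t ∈ labels t := by
  obtain ⟨a, cs⟩ := t
  have h : minLabel (node a cs) = (labels (node a cs)).foldr min a := rfl
  have key : ∀ (l : List ℕ) (x : ℕ), l.foldr min x = x ∨ l.foldr min x ∈ l := by
    intro l
    induction l with
    | nil => intro x; left; rfl
    | cons b l ih =>
      intro x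
      simp only [List.foldr_cons]
      rcases le_total b (l.foldr min x) with hb | hb
      · right; rw [min_eq_left hb]; exact List.mem_cons_self
      · rw [min_eq_right hb]
        rcases ih x with h1 | h1
        · left; exact h1
        · right; exact List.mem_cons_of_mem _ h1
  rcases key (labels (node a cs)) a with h1 | h1
  · rw [h, h1, labels_node]; exact List.mem_cons_self
  · rw [h]; exact h1

lemma minLabel_le (t : LTree) : ∀ b ∈ labels t, minLabel t ≤ b := by
  obtain ⟨a, cs⟩ := t
  have key : ∀ (l : List ℕ) (x : ℕ), ∀ b ∈ l, l.foldr min x ≤ b := by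
    intro l
    induction l with
    | nil => intro x b hb; cases hb
    | cons c l ih =>
      intro x b hb
      simp only [List.foldr_cons]
      rcases List.mem_cons.mp hb with rfl | hb
      · exact min_le_left _ _
      · exact le_trans (min_le_right _ _) (ih x b hb)
  exact key _ _

lemma impr_leaf (a : ℕ) : impr (node a []) = 0 := rfl

lemma prop_leaf (a : ℕ) : propCount (node a []) = 0 := rfl

lemma improperEdges_node (a : ℕ) (cs : List LTree) :
    improperEdges (node a cs) = improperEdgesAux a cs := by
  simp [improperEdges]

lemma properEdges_node (a : ℕ) (cs : List LTree) :
    properEdges (node a cs) = properEdgesAux a cs := by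
  simp [properEdges]

lemma impr_cons (a : ℕ) (c : LTree) (rest : List LTree) :
    impr (node a (c :: rest))
      = (if minLabel c < minLabel (node a rest) then 1 else 0) + impr c + impr (node a rest) := by
  unfold impr
  rw [improperEdges_node, improperEdges_node]
  show (improperEdgesAux a (c :: rest)).length = _
  rw [show improperEdgesAux a (c :: rest)
      = (if minLabel c < minOver a rest then [(a, rootLabel c)] else [])
        ++ improperEdges c ++ improperEdgesAux a rest by simp [improperEdgesAux]]
  rw [List.length_append, List.length_append, minOver_eq_minLabel]
  split_ifs <;> simp [improperEdges_node]

lemma prop_cons (a : ℕ) (c : LTree) (rest : List LTree) :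
    propCount (node a (c :: rest))
      = (if minLabel c < minLabel (node a rest) then 0 else 1) + propCount c
        + propCount (node a rest) := by
  unfold propCount
  rw [properEdges_node, properEdges_node]
  show (properEdgesAux a (c :: rest)).length = _
  rw [show properEdgesAux a (c :: rest)
      = (if minLabel c < minOver a rest then [] else [(a, rootLabel c)])
        ++ properEdges c ++ properEdgesAux a rest by simp [properEdgesAux]]
  rw [List.length_append, List.length_append, minOver_eq_minLabel]
  split_ifs <;> simp [properEdges_node]

lemma labels_cons_multiset (a : ℕ) (c : LTree) (rest : List LTree) :
    (labels (node a (c :: rest)) : Multiset ℕ)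
      = (labels c : Multiset ℕ) + (labels (node a rest) : Multiset ℕ) := by
  rw [labels_node, labelsList_cons, labels_node]
  simp only [← Multiset.coe_add, ← Multiset.cons_coe]
  rw [Multiset.add_cons]

/-- glue a tree `c` as new first child of the root of `t` -/
def glue (c t : LTree) : LTree := node t.rootLabel (c :: t.children)

lemma glue_node (c : LTree) (a : ℕ) (cs : List LTree) :
    glue c (node a cs) = node a (c :: cs) := rfl

lemma labels_glue (c t : LTree) :
    (labels (glue c t) : Multiset ℕ) = (labels c : Multiset ℕ) + (labels t : Multiset ℕ) := by
  obtain ⟨a, cs⟩ := t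
  exact labels_cons_multiset a c cs

noncomputable instance : DecidableEq LTree := Classical.decEq _

lemma labels_ne_nil (t : LTree) : labels t ≠ [] := by
  obtain ⟨a, cs⟩ := t
  rw [labels_node]
  simp

open Classical in
/-- All labeled plane trees whose label multiset is the given finset (fuel-based recursion). -/
noncomputable def allT : ℕ → Finset ℕ → Finset LTree
  | 0, _ => ∅
  | fuel+1, L =>
      (if L.card = 1 then L.image (fun a => node a []) else ∅)
      ∪ (L.powerset.filter (fun A => A.Nonempty ∧ A ≠ L)).biUnion
          (fun A => ((allT fuel A) ×ˢ (allT fuel (L \ A))).image (fun p => glue p.1 p.2))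

lemma mem_allT : ∀ (fuel : ℕ) (L : Finset ℕ) (t : LTree), L.card ≤ fuel →
    (t ∈ allT fuel L ↔ (labels t : Multiset ℕ) = L.val) := by
  intro fuel
  induction fuel with
  | zero =>
    intro L t hL
    have hL0 : L = ∅ := Finset.card_eq_zero.mp (Nat.le_zero.mp hL)
    subst hL0
    simp only [allT]
    constructor
    · intro h; cases h
    · intro h
      exact absurd (show labels t = [] by simpa using h) (labels_ne_nil t)
  | succ fuel ih =>
    intro L t hL
    constructor
    · intro ht
      rw [allT] at ht
      rcases Finset.mem_union.mp ht with h | h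
      · -- base case: leaf
        by_cases hc : L.card = 1
        · rw [if_pos hc] at h
          obtain ⟨a, ha, rfl⟩ := Finset.mem_image.mp h
          obtain ⟨b, rfl⟩ := Finset.card_eq_one.mp hc
          have : a = b := Finset.mem_singleton.mp ha
          subst this
          rw [labels_node]
          simp [labelsList]
        · rw [if_neg hc] at h; cases h
      · obtain ⟨A, hA, hmem⟩ := Finset.mem_biUnion.mp h
        have hA' := Finset.mem_filter.mp hA
        have hApow := Finset.mem_powerset.mp hA'.1
        have hAne := hA'.2.1
        have hAneL := hA'.2.2
        obtain ⟨p, hp, rfl⟩ := Finset.mem_image.mp hmem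
        obtain ⟨hp1, hp2⟩ := Finset.mem_product.mp hp
        have hAcard : A.card < L.card := Finset.card_lt_card (ssubset_of_subset_of_ne hApow hAneL)
        have hAfuel : A.card ≤ fuel := by omega
        have hsd : (L \ A).card ≤ fuel := by
          rw [Finset.card_sdiff_of_subset hApow]
          have := Finset.card_pos.mpr hAne
          omega
        have e1 := (ih A p.1 hAfuel).mp hp1
        have e2 := (ih (L \ A) p.2 hsd).mp hp2
        rw [labels_glue, e1, e2, Finset.sdiff_val]
        exact add_tsub_cancel_of_le (Finset.val_le_iff.mpr hApow)
    · intro hlab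
      rw [allT]
      obtain ⟨a, cs⟩ := t
      have hcard : (labels (node a cs)).length = L.card := by
        have := congrArg Multiset.card hlab
        simpa using this
      match cs with
      | [] =>
        apply Finset.mem_union_left
        have h1 : L.card = 1 := by
          rw [← hcard, labels_node]
          simp [labelsList]
        rw [if_pos h1]
        apply Finset.mem_image.mpr
        refine ⟨a, ?_, rfl⟩
        rw [← Finset.mem_val, ← hlab, labels_node]
        simp [labelsList]
      | c :: rest =>
        apply Finset.mem_union_right
        set t' : LTree := node a rest with ht'
        have hsplit : (labels c : Multiset ℕ) + (labels t' : Multiset ℕ) = L.val := by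
          rw [← labels_cons_multiset]; exact hlab
        have hnodupL : L.val.Nodup := L.nodup
        have hnodupc : ((labels c : Multiset ℕ)).Nodup := by
          apply Multiset.nodup_of_le _ hnodupL
          rw [← hsplit]; exact Multiset.le_add_right _ _
        set A : Finset ℕ := ⟨(labels c : Multiset ℕ), hnodupc⟩ with hA
        have hAval : A.val = (labels c : Multiset ℕ) := rfl
        have hAsub : A ⊆ L := by
          rw [← Finset.val_le_iff, hAval, ← hsplit]
          exact Multiset.le_add_right _ _
        have hAne : A.Nonempty := by
          apply Finset.card_pos.mp
          show Multiset.card A.val > 0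
          rw [hAval]
          simpa using List.length_pos_of_ne_nil (labels_ne_nil c)
        have ht'ne : (labels t' : Multiset ℕ) ≠ 0 := by
          simpa using labels_ne_nil t'
        have hAneL : A ≠ L := by
          intro hEq
          apply ht'ne
          have : A.val = L.val := by rw [hEq]
          rw [hAval] at this
          have h2 : (labels c : Multiset ℕ) + (labels t' : Multiset ℕ)
              = (labels c : Multiset ℕ) + 0 := by rw [add_zero]; exact hsplit.trans this.symm
          exact add_left_cancel h2
        have hsdval : (L \ A).val = (labels t' : Multiset ℕ) := by
          rw [Finset.sdiff_val, hAval, ← hsplit]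
          exact add_tsub_cancel_left _ _
        have hAcard : A.card < L.card := Finset.card_lt_card (ssubset_of_subset_of_ne hAsub hAneL)
        have hAfuel : A.card ≤ fuel := by omega
        have hsdfuel : (L \ A).card ≤ fuel := by
          rw [Finset.card_sdiff_of_subset hAsub]
          have := Finset.card_pos.mpr hAne
          omega
        apply Finset.mem_biUnion.mpr
        refine ⟨A, Finset.mem_filter.mpr ⟨Finset.mem_powerset.mpr hAsub, hAne, hAneL⟩, ?_⟩
        apply Finset.mem_image.mpr
        refine ⟨(c, t'), ?_, rfl⟩
        apply Finset.mem_product.mpr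
        constructor
        · exact (ih A c hAfuel).mpr hAval.symm
        · exact (ih (L \ A) t' hsdfuel).mpr hsdval.symm

lemma allT_fuel_eq (fuel : ℕ) (L : Finset ℕ) (h : L.card ≤ fuel) :
    allT fuel L = allT L.card L := by
  apply Finset.ext
  intro t
  rw [mem_allT fuel L t h, mem_allT L.card L t le_rfl]

open Finset Nat in
lemma _root_.ddopen : True := trivial

open Finset Nat

/-- double factorial helper: dd k = (2k-1)!! -/
def dd : ℕ → ℕ
  | 0 => 1
  | k+1 => (2*k+1) * dd k

lemma dd_eq (k : ℕ) : dd k = (2*k-1)‼ := by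
  induction k with
  | zero => rfl
  | succ k ih =>
    rcases k with _ | k
    · rfl
    · show (2*(k+1)+1) * dd (k+1) = (2*(k+2)-1)‼
      have h : 2*(k+2)-1 = (2*(k+1)-1) + 2 := by omega
      rw [ih, h, Nat.doubleFactorial]
      congr 1

/-- peel off the first term of a sum over `range (p+2)` -/
lemma peel (f g : ℕ → ℕ) (p : ℕ) (h : ∀ i < p+1, f (i+1) = g i) :
    ∑ i ∈ range (p+2), f i = (∑ i ∈ range (p+1), g i) + f 0 := by
  rw [Finset.sum_range_succ']
  congr 1
  apply Finset.sum_congr rfl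
  intro i hi
  exact h i (mem_range.mp hi)

def sA (p : ℕ) : ℕ := ∑ i ∈ range (p+1), p.choose i * dd i * dd (p-i)
def sH (p : ℕ) : ℕ := ∑ i ∈ range (p+1), i * p.choose i * dd i * dd (p-i)
def sG (p : ℕ) : ℕ := ∑ i ∈ range (p+1), (p+1).choose i * dd i * dd (p-i)
def sHH (p : ℕ) : ℕ := ∑ i ∈ range (p+1), i * (p+1).choose i * dd i * dd (p-i)

lemma twoH (p : ℕ) : 2 * sH p = p * sA p := by
  have hrefl : sH p = ∑ i ∈ range (p+1), (p-i) * p.choose i * dd i * dd (p-i) := by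
    unfold sH
    rw [← Finset.sum_range_reflect]
    apply Finset.sum_congr rfl
    intro i hi
    have hi' : i ≤ p := Nat.lt_succ_iff.mp (mem_range.mp hi)
    have h1 : p + 1 - 1 - i = p - i := by omega
    have h2 : p - (p - i) = i := by omega
    rw [h1, h2, Nat.choose_symm hi']
    ring
  have h2 : 2 * sH p = sH p + sH p := by ring
  rw [h2]
  nth_rewrite 2 [hrefl]
  unfold sH sA
  rw [← Finset.sum_add_distrib, Finset.mul_sum]
  apply Finset.sum_congr rfl
  intro i hi
  have hi' : i ≤ p := Nat.lt_succ_iff.mp (mem_range.mp hi)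
  have h3 : i + (p - i) = p := by omega
  calc i * p.choose i * dd i * dd (p-i) + (p-i) * p.choose i * dd i * dd (p-i)
      = (i + (p-i)) * (p.choose i * dd i * dd (p-i)) := by ring
    _ = p * (p.choose i * dd i * dd (p-i)) := by rw [h3]
    _ = p * (p.choose i * dd i * dd (p-i)) := rfl

lemma sumV (p : ℕ) : ∑ i ∈ range (p+1), p.choose i * dd (i+1) * dd (p-i) = (p+1) * sA p := by
  have h1 : ∀ i ∈ range (p+1), p.choose i * dd (i+1) * dd (p-i)
      = 2 * (i * p.choose i * dd i * dd (p-i)) + p.choose i * dd i * dd (p-i) := by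
    intro i hi
    show p.choose i * ((2*i+1) * dd i) * dd (p-i) = _
    ring
  rw [Finset.sum_congr rfl h1, Finset.sum_add_distrib, ← Finset.mul_sum]
  have h4 := twoH p
  unfold sH sA at *
  rw [Nat.add_mul, one_mul]
  omega

lemma sumU (p : ℕ) : ∑ j ∈ range (p+2), p.choose j * dd j * dd (p+1-j) = (p+1) * sA p := by
  rw [Finset.sum_range_succ]
  simp only [Nat.choose_succ_self, Nat.zero_mul, zero_mul, add_zero]
  have hrefl : ∑ j ∈ range (p+1), p.choose j * dd j * dd (p+1-j)
      = ∑ i ∈ range (p+1), p.choose i * dd (i+1) * dd (p-i) := by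
    rw [← Finset.sum_range_reflect]
    apply Finset.sum_congr rfl
    intro i hi
    have hi' : i ≤ p := Nat.lt_succ_iff.mp (mem_range.mp hi)
    have h1 : p + 1 - 1 - i = p - i := by omega
    have h2 : p + 1 - (p - i) = i + 1 := by omega
    rw [h1, h2, Nat.choose_symm hi']
    ring
  rw [hrefl, sumV]

lemma sA_succ (p : ℕ) : sA (p+1) = 2 * (p+1) * sA p := by
  have h0 : sA (p+1) = (∑ i ∈ range (p+1), (p+1).choose (i+1) * dd (i+1) * dd (p-i))
      + dd (p+1) := by
    unfold sA
    rw [peel _ (fun i => (p+1).choose (i+1) * dd (i+1) * dd (p-i)) p]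
    · congr 1
      show (p+1).choose 0 * dd 0 * dd (p+1-0) = dd (p+1)
      simp [show dd 0 = 1 from rfl]
    · intro i hi
      have h : p + 1 - (i+1) = p - i := by omega
      rw [h]
  have h2 : ∀ i ∈ range (p+1), (p+1).choose (i+1) * dd (i+1) * dd (p-i)
      = p.choose i * dd (i+1) * dd (p-i) + p.choose (i+1) * dd (i+1) * dd (p-i) := by
    intro i hi
    rw [Nat.choose_succ_succ, Nat.add_mul, Nat.add_mul]
  rw [h0, Finset.sum_congr rfl h2, Finset.sum_add_distrib, sumV]
  have h3 : (∑ i ∈ range (p+1), p.choose (i+1) * dd (i+1) * dd (p-i)) + dd (p+1)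
      = ∑ j ∈ range (p+2), p.choose j * dd j * dd (p+1-j) := by
    rw [peel _ (fun i => p.choose (i+1) * dd (i+1) * dd (p-i)) p]
    · congr 1
      show dd (p+1) = p.choose 0 * dd 0 * dd (p+1-0)
      simp [show dd 0 = 1 from rfl]
    · intro i hi
      have h : p + 1 - (i+1) = p - i := by omega
      rw [h]
  rw [add_assoc, h3, sumU]
  ring

lemma sA_eq (p : ℕ) : sA p = 2^p * p.factorial := by
  induction p with
  | zero => rfl
  | succ p ih =>
    rw [sA_succ, ih, Nat.factorial_succ]
    ring

lemma sG_succ (p : ℕ) : sG (p+1) = sA (p+1) + (2 * sHH p + sG p) := by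
  have h0 : sG (p+1) = (∑ i ∈ range (p+1), (p+2).choose (i+1) * dd (i+1) * dd (p-i))
      + dd (p+1) := by
    unfold sG
    rw [peel _ (fun i => (p+2).choose (i+1) * dd (i+1) * dd (p-i)) p]
    · congr 1
      show (p+2).choose 0 * dd 0 * dd (p+1-0) = dd (p+1)
      simp [show dd 0 = 1 from rfl]
    · intro i hi
      have h : p + 1 - (i+1) = p - i := by omega
      rw [h]
  have h2 : ∀ i ∈ range (p+1), (p+2).choose (i+1) * dd (i+1) * dd (p-i)
      = (2 * (i * (p+1).choose i * dd i * dd (p-i)) + (p+1).choose i * dd i * dd (p-i))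
        + (p+1).choose (i+1) * dd (i+1) * dd (p-i) := by
    intro i hi
    rw [Nat.choose_succ_succ, Nat.add_mul, Nat.add_mul]
    congr 1
    show (p+1).choose i * ((2*i+1) * dd i) * dd (p-i) = _
    ring
  have h3 : (∑ i ∈ range (p+1), (p+1).choose (i+1) * dd (i+1) * dd (p-i)) + dd (p+1)
      = sA (p+1) := by
    unfold sA
    rw [peel _ (fun i => (p+1).choose (i+1) * dd (i+1) * dd (p-i)) p]
    · congr 1
      show dd (p+1) = (p+1).choose 0 * dd 0 * dd (p+1-0)
      simp [show dd 0 = 1 from rfl]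
    · intro i hi
      have h : p + 1 - (i+1) = p - i := by omega
      rw [h]
  rw [h0, Finset.sum_congr rfl h2, Finset.sum_add_distrib, Finset.sum_add_distrib,
    ← Finset.mul_sum]
  have hHH : ∑ i ∈ range (p+1), i * (p+1).choose i * dd i * dd (p-i) = sHH p := rfl
  have hG : ∑ i ∈ range (p+1), (p+1).choose i * dd i * dd (p-i) = sG p := rfl
  rw [hHH, hG]
  omega

lemma sHH_succ (p : ℕ) : sHH (p+1) = (p+2) * (2 * sHH p + sG p) := by
  have h0 : sHH (p+1) = ∑ i ∈ range (p+1), (i+1) * (p+2).choose (i+1) * dd (i+1) * dd (p-i) := by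
    unfold sHH
    rw [peel _ (fun i => (i+1) * (p+2).choose (i+1) * dd (i+1) * dd (p-i)) p]
    · simp
    · intro i hi
      have h : p + 1 - (i+1) = p - i := by omega
      rw [h]
  have h2 : ∀ i ∈ range (p+1), (i+1) * (p+2).choose (i+1) * dd (i+1) * dd (p-i)
      = (p+2) * (2 * (i * (p+1).choose i * dd i * dd (p-i)) + (p+1).choose i * dd i * dd (p-i)) := by
    intro i hi
    have hc : (i+1) * (p+2).choose (i+1) = (p+2) * (p+1).choose i := by
      linarith [Nat.add_one_mul_choose_eq (p+1) i]
    calc (i+1) * (p+2).choose (i+1) * dd (i+1) * dd (p-i)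
        = (i+1) * (p+2).choose (i+1) * ((2*i+1) * dd i) * dd (p-i) := rfl
      _ = ((i+1) * (p+2).choose (i+1)) * ((2*i+1) * dd i * dd (p-i)) := by ring
      _ = ((p+2) * (p+1).choose i) * ((2*i+1) * dd i * dd (p-i)) := by rw [hc]
      _ = (p+2) * (2 * (i * (p+1).choose i * dd i * dd (p-i)) + (p+1).choose i * dd i * dd (p-i)) := by
          ring
  rw [h0, Finset.sum_congr rfl h2, ← Finset.mul_sum, Finset.sum_add_distrib, ← Finset.mul_sum]
  rfl

lemma sG_sHH (p : ℕ) : sG p = dd (p+1) ∧ sHH p + (p+1) * sA p = (p+1) * dd (p+1) := by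
  induction p with
  | zero => constructor <;> rfl
  | succ p ih =>
    obtain ⟨ihG, ihH⟩ := ih
    have e3 : sA (p+1) = 2*((p+1) * sA p) := by rw [sA_succ]; ring
    have eD : dd (p+2) = 2*((p+1)*dd (p+1)) + dd (p+1) := by
      show (2*(p+1)+1) * dd (p+1) = _
      ring
    have l1 : sG (p+1) + 2*((p+1) * sA p)
        = 2*((p+1) * sA p) + 2*((p+1)*dd (p+1)) + dd (p+1) := by
      rw [sG_succ, e3, ← ihH, ← ihG]; ring
    have l2 : sHH (p+1) + (p+2)*(2*((p+1)*sA p))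
        = (p+2)*(2*((p+1)*dd (p+1)) + dd (p+1)) := by
      rw [sHH_succ, ← ihH, ← ihG]; ring
    constructor
    · show sG (p+1) = dd (p+2)
      omega
    · show sHH (p+1) + (p+2) * sA (p+1) = (p+2) * dd (p+2)
      rw [e3, eD]
      exact l2

lemma identE (p : ℕ) : ∑ i ∈ range (p+1), (p+1).choose i * dd i * dd (p-i) = dd (p+1) :=
  (sG_sHH p).1

lemma identE' (p : ℕ) : ∑ i ∈ range (p+1), (p+1).choose (i+1) * dd i * dd (p-i) = dd (p+1) := by
  rw [← identE p, ← Finset.sum_range_reflect]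
  apply Finset.sum_congr rfl
  intro i hi
  have hi' : i ≤ p := Nat.lt_succ_iff.mp (mem_range.mp hi)
  have h1 : p + 1 - 1 - i = p - i := by omega
  have h2 : p - (p - i) = i := by omega
  have h3 : (p+1).choose (p - i + 1) = (p+1).choose i := by
    have h4 : p - i + 1 = (p+1) - i := by omega
    rw [h4, Nat.choose_symm (by omega)]
  rw [h1, h2, h3]
  ring

open MvPolynomial

noncomputable def wt (t : LTree) : MvPolynomial (Fin 2) ℤ := X 0 ^ impr t * X 1 ^ propCount t

lemma wt_glue (c t : LTree) :
    wt (glue c t) = (if minLabel c < minLabel t then (X 0 : MvPolynomial (Fin 2) ℤ) else X 1)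
      * (wt c * wt t) := by
  obtain ⟨a, rest⟩ := t
  rw [glue_node]
  unfold wt
  rw [impr_cons, prop_cons]
  split_ifs with h
  · rw [pow_add, pow_add, pow_add, pow_add]
    ring
  · rw [pow_add, pow_add, pow_add, pow_add]
    ring

lemma glue_injective {c t c' t' : LTree} (h : glue c t = glue c' t') : c = c' ∧ t = t' := by
  obtain ⟨a, cs⟩ := t
  obtain ⟨a', cs'⟩ := t'
  rw [glue_node, glue_node] at h
  injection h with h1 h2
  injection h2 with h3 h4
  exact ⟨h3, by rw [h1, h4]⟩

lemma minLabel_eq_min' (t : LTree) (A : Finset ℕ) (hA : A.Nonempty)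
    (h : (labels t : Multiset ℕ) = A.val) : minLabel t = A.min' hA := by
  apply le_antisymm
  · apply minLabel_le
    have : A.min' hA ∈ A.val := Finset.min'_mem A hA
    rw [← h] at this
    exact Multiset.mem_coe.mp this
  · apply Finset.min'_le
    show minLabel t ∈ A.val
    rw [← h]
    exact Multiset.mem_coe.mpr (minLabel_mem t)

lemma min'_sdiff_iff (L A : Finset ℕ) (hA : A.Nonempty) (hsub : A ⊆ L) (hne : A ≠ L)
    (hL : L.Nonempty) (hB : (L \ A).Nonempty) :
    (A.min' hA < (L \ A).min' hB) ↔ L.min' hL ∈ A := by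
  by_cases hmem : L.min' hL ∈ A
  · simp only [hmem, iff_true]
    have h1 : A.min' hA ≤ L.min' hL := Finset.min'_le _ _ hmem
    have h3 : L.min' hL ≤ (L \ A).min' hB :=
      Finset.min'_le _ _ (Finset.mem_sdiff.mp (Finset.min'_mem _ hB)).1
    rcases eq_or_lt_of_le h3 with heq | hlt
    · exfalso
      have : L.min' hL ∈ L \ A := by rw [heq]; exact Finset.min'_mem _ hB
      exact (Finset.mem_sdiff.mp this).2 hmem
    · exact lt_of_le_of_lt h1 hlt
  · simp only [hmem, iff_false, not_lt]
    have hmem2 : L.min' hL ∈ L \ A := Finset.mem_sdiff.mpr ⟨Finset.min'_mem _ _, hmem⟩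
    calc (L \ A).min' hB ≤ L.min' hL := Finset.min'_le _ _ hmem2
      _ ≤ A.min' hA := Finset.min'_le _ _ (hsub (Finset.min'_mem _ hA))

lemma numer1 (p : ℕ) : ∑ j ∈ Finset.range (p+2),
    (if j = 0 then 0 else (p+1).choose j * dd (j-1) * dd (p+1-j)) = dd (p+1) := by
  rw [Finset.sum_range_succ']
  have h0 : (if (0:ℕ) = 0 then 0 else (p+1).choose 0 * dd (0-1) * dd (p+1-0)) = 0 := by simp
  rw [h0, add_zero, ← identE' p]
  apply Finset.sum_congr rfl
  intro i hi
  rw [if_neg (by omega)]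
  have h1 : i + 1 - 1 = i := by omega
  have h2 : p + 1 - (i + 1) = p - i := by omega
  rw [h1, h2]

lemma numer2 (p : ℕ) : ∑ j ∈ Finset.range (p+2),
    (if j = p+1 then 0 else (p+1).choose j * dd j * dd (p-j)) = dd (p+1) := by
  rw [Finset.sum_range_succ, if_pos rfl, add_zero, ← identE p]
  apply Finset.sum_congr rfl
  intro i hi
  have hi' : i < p + 1 := Finset.mem_range.mp hi
  rw [if_neg (by omega)]

noncomputable def F1 (f j : ℕ) : MvPolynomial (Fin 2) ℤ :=
  if j = 0 then 0 else X 1 * ((dd (j-1) * dd (f - j) : ℕ) : MvPolynomial (Fin 2) ℤ)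

noncomputable def F2 (f j : ℕ) : MvPolynomial (Fin 2) ℤ :=
  if j = f then 0 else X 0 * ((dd j * dd (f - 1 - j) : ℕ) : MvPolynomial (Fin 2) ℤ)

lemma powerset_sum (μ : ℕ) (L' : Finset ℕ) (hμ : μ ∉ L') (f : ℕ) (hcard : L'.card = f)
    (hf : 1 ≤ f) :
    ∑ A ∈ (insert μ L').powerset,
        (if A.Nonempty ∧ A ≠ insert μ L' then
          (if μ ∈ A then (X 0 : MvPolynomial (Fin 2) ℤ) else X 1)
            * ((dd (A.card - 1) * dd (f + 1 - A.card - 1) : ℕ) : MvPolynomial (Fin 2) ℤ)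
          else 0)
      = ((dd f : ℕ) : MvPolynomial (Fin 2) ℤ) * (X 0 + X 1) := by
  classical
  rw [Finset.sum_powerset_insert hμ]
  have e1 : ∀ B ∈ L'.powerset,
      (if B.Nonempty ∧ B ≠ insert μ L' then
        (if μ ∈ B then (X 0 : MvPolynomial (Fin 2) ℤ) else X 1)
          * ((dd (B.card - 1) * dd (f + 1 - B.card - 1) : ℕ) : MvPolynomial (Fin 2) ℤ)
        else 0)
      = F1 f B.card := by
    intro B hB
    have hBsub := Finset.mem_powerset.mp hB
    have hμB : μ ∉ B := fun h => hμ (hBsub h)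
    by_cases hBne : B.Nonempty
    · have hne2 : B ≠ insert μ L' := by
        intro h
        exact hμB (h ▸ Finset.mem_insert_self μ L')
      rw [if_pos ⟨hBne, hne2⟩, if_neg hμB]
      unfold F1
      have hB0 : B.card ≠ 0 := by
        have := Finset.card_pos.mpr hBne
        omega
      rw [if_neg hB0]
      have h5 : f + 1 - B.card - 1 = f - B.card := by omega
      rw [h5]
    · have hBemp : B = ∅ := Finset.not_nonempty_iff_eq_empty.mp hBne
      rw [if_neg (fun hh => hBne hh.1)]
      unfold F1
      rw [hBemp]
      simp
  have e2 : ∀ B ∈ L'.powerset,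
      (if (insert μ B).Nonempty ∧ insert μ B ≠ insert μ L' then
        (if μ ∈ insert μ B then (X 0 : MvPolynomial (Fin 2) ℤ) else X 1)
          * ((dd ((insert μ B).card - 1) * dd (f + 1 - (insert μ B).card - 1) : ℕ)
              : MvPolynomial (Fin 2) ℤ)
        else 0)
      = F2 f B.card := by
    intro B hB
    have hBsub := Finset.mem_powerset.mp hB
    have hμB : μ ∉ B := fun h => hμ (hBsub h)
    have hcardins : (insert μ B).card = B.card + 1 := Finset.card_insert_of_notMem hμB
    have hiff : insert μ B = insert μ L' ↔ B = L' := by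
      constructor
      · intro h
        have h2 := congrArg (fun s => Finset.erase s μ) h
        simpa [Finset.erase_insert hμB, Finset.erase_insert hμ] using h2
      · intro h; rw [h]
    by_cases hBL : B = L'
    · rw [if_neg (fun hh => hh.2 (hiff.mpr hBL))]
      unfold F2
      rw [if_pos (by rw [hBL, hcard])]
    · rw [if_pos ⟨Finset.insert_nonempty _ _, fun hh => hBL (hiff.mp hh)⟩,
        if_pos (Finset.mem_insert_self _ _), hcardins]
      unfold F2
      have hBcard : B.card ≤ f := hcard ▸ Finset.card_le_card hBsub
      have hBf : B.card ≠ f := by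
        intro h
        exact hBL (Finset.eq_of_subset_of_card_le hBsub (by omega))
      rw [if_neg hBf]
      have h5 : B.card + 1 - 1 = B.card := by omega
      have h6 : f + 1 - (B.card + 1) - 1 = f - 1 - B.card := by omega
      rw [h5, h6]
  rw [Finset.sum_congr rfl e1, Finset.sum_congr rfl e2]
  rw [Finset.sum_powerset, Finset.sum_powerset]
  have e3 : ∀ j ∈ Finset.range (L'.card + 1),
      ∑ B ∈ Finset.powersetCard j L', F1 f B.card = L'.card.choose j • F1 f j :=
    fun j _ => Finset.sum_powersetCard j L' (F1 f)
  have e4 : ∀ j ∈ Finset.range (L'.card + 1),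
      ∑ B ∈ Finset.powersetCard j L', F2 f B.card = L'.card.choose j • F2 f j :=
    fun j _ => Finset.sum_powersetCard j L' (F2 f)
  rw [Finset.sum_congr rfl e3, Finset.sum_congr rfl e4, hcard]
  obtain ⟨p, rfl⟩ : ∃ p, f = p + 1 := ⟨f - 1, by omega⟩
  have s1 : ∑ j ∈ Finset.range (p+2), (p+1).choose j • F1 (p+1) j
      = X 1 * ((dd (p+1) : ℕ) : MvPolynomial (Fin 2) ℤ) := by
    have e5 : ∀ j ∈ Finset.range (p+2), (p+1).choose j • F1 (p+1) j
        = X 1 * (((if j = 0 then 0 else (p+1).choose j * dd (j-1) * dd (p+1-j)) : ℕ)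
            : MvPolynomial (Fin 2) ℤ) := by
      intro j hj
      unfold F1
      by_cases hj0 : j = 0
      · subst hj0; simp
      · rw [if_neg hj0, if_neg hj0, nsmul_eq_mul]
        push_cast
        ring
    rw [Finset.sum_congr rfl e5, ← Finset.mul_sum, ← Nat.cast_sum, numer1 p]
  have s2 : ∑ j ∈ Finset.range (p+2), (p+1).choose j • F2 (p+1) j
      = X 0 * ((dd (p+1) : ℕ) : MvPolynomial (Fin 2) ℤ) := by
    have e5 : ∀ j ∈ Finset.range (p+2), (p+1).choose j • F2 (p+1) j
        = X 0 * (((if j = p+1 then 0 else (p+1).choose j * dd j * dd (p-j)) : ℕ)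
            : MvPolynomial (Fin 2) ℤ) := by
      intro j hj
      unfold F2
      by_cases hj0 : j = p+1
      · subst hj0; simp
      · rw [if_neg hj0, if_neg hj0, nsmul_eq_mul]
        have h7 : p + 1 - 1 - j = p - j := by omega
        rw [h7]
        push_cast
        ring
    rw [Finset.sum_congr rfl e5, ← Finset.mul_sum, ← Nat.cast_sum, numer2 p]
  rw [s1, s2]
  ring

lemma labelsList_eq_nil {cs : List LTree} (h : labelsList cs = []) : cs = [] := by
  cases cs with
  | nil => rfl
  | cons c rest =>
    rw [labelsList_cons] at h
    exact absurd (List.append_eq_nil_iff.mp h).1 (labels_ne_nil c)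

lemma allT_singleton (a : ℕ) : allT 1 {a} = {node a []} := by
  apply Finset.ext
  intro t
  rw [mem_allT 1 {a} t (by simp)]
  constructor
  · intro h
    obtain ⟨b, cs⟩ := t
    rw [labels_node] at h
    have h2 : b :: labelsList cs = [a] := by
      have h3 : ({a} : Finset ℕ).val = (↑[a] : Multiset ℕ) := rfl
      rw [h3] at h
      exact List.perm_singleton.mp (Multiset.coe_eq_coe.mp h)
    injection h2 with hb hl
    rw [Finset.mem_singleton, hb, labelsList_eq_nil hl]
  · intro h
    rw [Finset.mem_singleton] at h
    subst h
    rw [labels_node]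
    show ((a :: labelsList [] : List ℕ) : Multiset ℕ) = ({a} : Finset ℕ).val
    rfl

lemma sum_allT : ∀ (m : ℕ) (L : Finset ℕ), L.card = m → 1 ≤ m →
    ∑ t ∈ allT m L, wt t
      = ((dd (m-1) : ℕ) : MvPolynomial (Fin 2) ℤ) * (X 0 + X 1)^(m-1) := by
  intro m
  induction m using Nat.strong_induction_on with
  | _ m ih =>
  intro L hcard hm
  rcases Nat.lt_or_ge m 2 with hm2 | hm2
  · have hm1 : m = 1 := by omega
    subst hm1
    obtain ⟨a, rfl⟩ := Finset.card_eq_one.mp hcard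
    rw [allT_singleton, Finset.sum_singleton]
    unfold wt
    rw [show impr (node a []) = 0 from rfl, show propCount (node a []) = 0 from rfl]
    norm_num
    rfl
  · obtain ⟨q, rfl⟩ : ∃ q, m = q + 1 := ⟨m - 1, by omega⟩
    have hq1 : 1 ≤ q := by omega
    have hL : L.Nonempty := Finset.card_pos.mp (by omega)
    have hstep : allT (q+1) L = (L.powerset.filter (fun A => A.Nonempty ∧ A ≠ L)).biUnion
        (fun A => ((allT q A) ×ˢ (allT q (L \ A))).image (fun pr => glue pr.1 pr.2)) := by
      rw [allT, if_neg (by omega : ¬ L.card = 1), Finset.empty_union]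
    rw [hstep]
    have hfacts : ∀ A ∈ L.powerset.filter (fun A => A.Nonempty ∧ A ≠ L),
        A ⊆ L ∧ A.Nonempty ∧ A ≠ L ∧ 1 ≤ A.card ∧ A.card ≤ q
          ∧ (L \ A).card = q + 1 - A.card ∧ (L \ A).Nonempty := by
      intro A hA
      have h1 := Finset.mem_filter.mp hA
      have hsub := Finset.mem_powerset.mp h1.1
      have hne := h1.2.1
      have hneL := h1.2.2
      have hlt : A.card < L.card := Finset.card_lt_card (ssubset_of_subset_of_ne hsub hneL)
      have hpos : 0 < A.card := Finset.card_pos.mpr hne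
      have hsd : (L \ A).card = q + 1 - A.card := by rw [Finset.card_sdiff_of_subset hsub, hcard]
      refine ⟨hsub, hne, hneL, by omega, by omega, hsd, ?_⟩
      apply Finset.card_pos.mp
      rw [hsd]
      omega
    have hdisj : Set.PairwiseDisjoint
        (↑(L.powerset.filter (fun A => A.Nonempty ∧ A ≠ L)) : Set (Finset ℕ))
        (fun A => ((allT q A) ×ˢ (allT q (L \ A))).image (fun pr => glue pr.1 pr.2)) := by
      intro A1 h1 A2 h2 hA12
      simp only [Function.onFun]
      rw [Finset.disjoint_left]
      intro t ht1 ht2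
      obtain ⟨f1s, f1ne, f1neL, f1k1, f1kq, -, -⟩ := hfacts A1 (Finset.mem_coe.mp h1)
      obtain ⟨f2s, f2ne, f2neL, f2k1, f2kq, -, -⟩ := hfacts A2 (Finset.mem_coe.mp h2)
      obtain ⟨p1, hp1, hgl1⟩ := Finset.mem_image.mp ht1
      obtain ⟨p2, hp2, hgl2⟩ := Finset.mem_image.mp ht2
      obtain ⟨hc1, -⟩ := Finset.mem_product.mp hp1
      obtain ⟨hc2, -⟩ := Finset.mem_product.mp hp2
      have hglue : glue p1.1 p1.2 = glue p2.1 p2.2 := by rw [hgl1, hgl2]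
      have hcc := (glue_injective hglue).1
      have l1 := (mem_allT q A1 p1.1 (by omega)).mp hc1
      have l2 := (mem_allT q A2 p2.1 (by omega)).mp hc2
      rw [hcc, l2] at l1
      exact hA12 (Finset.val_inj.mp l1.symm)
    rw [Finset.sum_biUnion hdisj]
    have hinner : ∀ A ∈ L.powerset.filter (fun A => A.Nonempty ∧ A ≠ L),
        ∑ t ∈ ((allT q A) ×ˢ (allT q (L \ A))).image (fun pr => glue pr.1 pr.2), wt t
          = ((if L.min' hL ∈ A then (X 0 : MvPolynomial (Fin 2) ℤ) else X 1)
              * ((dd (A.card - 1) * dd (q + 1 - A.card - 1) : ℕ) : MvPolynomial (Fin 2) ℤ))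
            * (X 0 + X 1)^(q-1) := by
      intro A hA
      obtain ⟨hsub, hne, hneL, hk1, hkq, hsdcard, hsdne⟩ := hfacts A hA
      rw [Finset.sum_image (fun x _ y _ hxy => by
        obtain ⟨e1, e2⟩ := glue_injective hxy
        exact Prod.ext e1 e2)]
      have hterm : ∀ pr ∈ (allT q A) ×ˢ (allT q (L \ A)),
          wt (glue pr.1 pr.2)
            = (if L.min' hL ∈ A then (X 0 : MvPolynomial (Fin 2) ℤ) else X 1)
              * (wt pr.1 * wt pr.2) := by
        intro pr hpr
        obtain ⟨hpc, hpt⟩ := Finset.mem_product.mp hpr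
        have l1 := (mem_allT q A pr.1 (by omega)).mp hpc
        have l2 := (mem_allT q (L \ A) pr.2 (by omega)).mp hpt
        rw [wt_glue, minLabel_eq_min' pr.1 A hne l1, minLabel_eq_min' pr.2 (L \ A) hsdne l2]
        rw [if_congr (min'_sdiff_iff L A hne hsub hneL hL hsdne) rfl rfl]
      rw [Finset.sum_congr rfl hterm, ← Finset.mul_sum, Finset.sum_product, ← Finset.sum_mul_sum]
      have r1 : ∑ c ∈ allT q A, wt c
          = ((dd (A.card - 1) : ℕ) : MvPolynomial (Fin 2) ℤ) * (X 0 + X 1)^(A.card - 1) := by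
        rw [allT_fuel_eq q A (by omega)]
        exact ih A.card (by omega) A rfl (by omega)
      have r2 : ∑ c ∈ allT q (L \ A), wt c
          = ((dd ((L \ A).card - 1) : ℕ) : MvPolynomial (Fin 2) ℤ)
              * (X 0 + X 1)^((L \ A).card - 1) := by
        rw [allT_fuel_eq q (L \ A) (by omega)]
        exact ih (L \ A).card (by omega) (L \ A) rfl (by omega)
      rw [r1, r2, hsdcard]
      have hexp : (A.card - 1) + ((q + 1 - A.card) - 1) = q - 1 := by omega
      rw [Nat.cast_mul, ← hexp, pow_add]
      ring
    rw [Finset.sum_congr rfl hinner, ← Finset.sum_mul, Finset.sum_filter]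
    have hins : insert (L.min' hL) (L.erase (L.min' hL)) = L :=
      Finset.insert_erase (Finset.min'_mem L hL)
    have herase_card : (L.erase (L.min' hL)).card = q := by
      rw [Finset.card_erase_of_mem (Finset.min'_mem L hL), hcard]
      omega
    have hμ : L.min' hL ∉ L.erase (L.min' hL) := Finset.notMem_erase _ _
    have hps := powerset_sum (L.min' hL) (L.erase (L.min' hL)) hμ q herase_card hq1
    rw [hins] at hps
    rw [hps]
    have hq2 : q - 1 + 1 = q := by omega
    have hq3 : q + 1 - 1 = q := by omega
    rw [hq3]
    have hpow : (X 0 + X 1 : MvPolynomial (Fin 2) ℤ)^q = (X 0 + X 1) * (X 0 + X 1)^(q-1) := by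
      conv_lhs => rw [← hq2]
      rw [_root_.pow_succ']
    rw [hpow]
    ring


end LTree

open Nat MvPolynomial

/-- `Pₙ(x,y) = (2n-1)!! (x+y)ⁿ` for `n ≥ 1`, where
`Pₙ(x,y) = Σ_{T ∈ 𝒫ₙ} x^{impr T} y^{prop T}` is the sum over all labeled plane
trees with `n` edges, as an identity in the polynomial ring `ℤ[x, y]`
(with `x = X 0`, `y = X 1`). -/
theorem planeTree_improper_proper_polynomial (n : ℕ) (hn : 1 ≤ n) :
    (∑ᶠ T ∈ {T : LTree | LTree.IsLPT n T},
        (X 0 : MvPolynomial (Fin 2) ℤ) ^ LTree.impr T * (X 1) ^ LTree.propCount T)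
      = ((2 * n - 1)‼ : MvPolynomial (Fin 2) ℤ) * (X 0 + X 1) ^ n := by
  classical
  have hnodup : (↑(List.range' 1 (n+1)) : Multiset ℕ).Nodup :=
    Multiset.coe_nodup.mpr (List.nodup_range' (s := 1) (n := n+1))
  set L : Finset ℕ := ⟨(↑(List.range' 1 (n+1)) : Multiset ℕ), hnodup⟩ with hLdef
  have hLcard : L.card = n + 1 := by
    show Multiset.card (↑(List.range' 1 (n+1)) : Multiset ℕ) = n + 1
    rw [Multiset.coe_card, List.length_range']
  have hset : {T : LTree | LTree.IsLPT n T} = ↑(LTree.allT (n+1) L) := by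
    ext t
    simp only [Set.mem_setOf_eq, Finset.mem_coe]
    rw [LTree.mem_allT (n+1) L t (le_of_eq hLcard)]
    show LTree.IsLPT n t ↔ _
    unfold LTree.IsLPT
    rw [show L.val = (↑(List.range' 1 (n+1)) : Multiset ℕ) from rfl]
    exact (Multiset.coe_eq_coe).symm
  rw [hset, finsum_mem_coe_finset]
  have hmain := LTree.sum_allT (n+1) L hLcard (by omega)
  unfold LTree.wt at hmain
  rw [hmain]
  have h1 : n + 1 - 1 = n := rfl
  rw [h1, LTree.dd_eq]
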